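/- For every privacy budget ε > 0, scale h > 0, center H̄ ∈ ℝ, bias Ā ∈ ℝ, and input x ∈ [H̄−h, H̄+h], the Zeal density g_x is nonnegative and integrates to 1 over ℝ, i.e., ∫ g_x(t) dt = 1; hence g_x is a probability density function. -/

import Mathlib

open MeasureTheory Real

/-- Probability level `p` of the Zeal piecewise density. -/
noncomputable def zealP (ε h : ℝ) : ℝ :=
  (Real.exp ε - Real.exp (ε / 2)) / (2 * h * (Real.exp (ε / 2) + 1))

/-- Output half-width `C` of the Zeal mechanism. -/
noncomputable def zealC (ε h : ℝ) : ℝ :=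
  h * (Real.exp (ε / 2) + 1) / (Real.exp (ε / 2) - 1)

/-- Left endpoint `L(x)` of the central (high-probability) band. -/
noncomputable def zealL (ε h H A x : ℝ) : ℝ :=
  (zealC ε h + h) / 2 * ((x - H) / h) - (zealC ε h - h) / 2 + H + A

/-- Right endpoint `R(x)` of the central band. -/
noncomputable def zealR (ε h H A x : ℝ) : ℝ :=
  zealL ε h H A x + zealC ε h - h

/-- The Zeal probability density `g_x` with parameters `(ε, h, H̄, Ā)`. -/
noncomputable def zealG (ε h H A x t : ℝ) : ℝ :=
  if H - zealC ε h + A ≤ t ∧ t < zealL ε h H A x then zealP ε h / Real.exp ε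
  else if zealL ε h H A x ≤ t ∧ t ≤ zealR ε h H A x then zealP ε h
  else if zealR ε h H A x < t ∧ t ≤ H + zealC ε h + A then zealP ε h / Real.exp ε
  else 0

/-- the Zeal density is nonnegative and integrates to 1. -/
theorem zeal_density_is_pdf (ε h H A x : ℝ) (hε : 0 < ε) (hh : 0 < h)
    (hx : x ∈ Set.Icc (H - h) (H + h)) :
    (∀ t : ℝ, 0 ≤ zealG ε h H A x t) ∧ (∫ t : ℝ, zealG ε h H A x t) = 1 := by
  obtain ⟨hx1, hx2⟩ := hx
  set s : ℝ := Real.exp (ε / 2) with hs_def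
  have hs1 : 1 < s := by
    rw [hs_def]
    have : (0:ℝ) < ε / 2 := by linarith
    calc (1:ℝ) = Real.exp 0 := (Real.exp_zero).symm
    _ < Real.exp (ε / 2) := Real.exp_lt_exp.mpr this
  have hs0 : 0 < s := by linarith
  have hes : Real.exp ε = s * s := by
    rw [hs_def, ← Real.exp_add]; ring_nf
  have hC : zealC ε h = h * (s + 1) / (s - 1) := rfl
  have hP : zealP ε h = (s * s - s) / (2 * h * (s + 1)) := by
    rw [zealP, hes, hs_def]
  have hs1' : s - 1 ≠ 0 := by linarith
  have hs1'' : s + 1 ≠ 0 := by linarith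
  have hh' : h ≠ 0 := ne_of_gt hh
  have hs0' : s ≠ 0 := ne_of_gt hs0
  have hCpos : 0 < zealC ε h := by
    rw [hC]; apply div_pos (by nlinarith) (by linarith)
  have hChsub : zealC ε h - h = 2 * h / (s - 1) := by
    rw [hC]; field_simp; ring
  have hChadd : zealC ε h + h = 2 * h * s / (s - 1) := by
    rw [hC]; field_simp; ring
  have hCh : h < zealC ε h := by
    have : 0 < 2 * h / (s - 1) := div_pos (by linarith) (by linarith)
    linarith [hChsub ▸ this]
  have hPpos : 0 < zealP ε h := by
    rw [hP]
    apply div_pos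
    · nlinarith
    · nlinarith
  have hQpos : 0 < zealP ε h / Real.exp ε := by
    apply div_pos hPpos (Real.exp_pos ε)
  -- endpoints and band
  set a : ℝ := H - zealC ε h + A with ha_def
  set b : ℝ := H + zealC ε h + A with hb_def
  set L : ℝ := zealL ε h H A x with hL_def
  set R : ℝ := zealR ε h H A x with hR_def
  have hLR : L ≤ R := by
    rw [hR_def, zealR]; rw [← hL_def]; linarith
  have haL : a ≤ L := by
    rw [ha_def, hL_def, zealL]
    have h1 : -1 ≤ (x - H) / h := by
      rw [le_div_iff₀ hh]; linarith
    nlinarith [mul_nonneg (by linarith : (0:ℝ) ≤ zealC ε h + h)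
      (by linarith : (0:ℝ) ≤ (x - H) / h + 1)]
  have hRb : R ≤ b := by
    rw [hb_def, hR_def, zealR, zealL]
    have h1 : (x - H) / h ≤ 1 := by
      rw [div_le_one hh]; linarith
    nlinarith [mul_nonneg (by linarith : (0:ℝ) ≤ zealC ε h + h)
      (by linarith : (0:ℝ) ≤ 1 - (x - H) / h)]
  set p : ℝ := zealP ε h with hp_def
  set q : ℝ := zealP ε h / Real.exp ε with hq_def
  have key : ∀ t : ℝ, zealG ε h H A x t =
      Set.indicator (Set.Ico a L) (fun _ => q) t
      + Set.indicator (Set.Icc L R) (fun _ => p) t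
      + Set.indicator (Set.Ioc R b) (fun _ => q) t := by
    intro t
    rw [zealG]
    rw [← ha_def, ← hb_def, ← hL_def, ← hR_def, ← hp_def, ← hq_def]
    by_cases h1 : a ≤ t ∧ t < L
    · rw [if_pos h1]
      rw [Set.indicator_of_mem (Set.mem_Ico.mpr h1),
        Set.indicator_of_notMem (by simp [Set.mem_Icc]; intro h; linarith [h1.2]),
        Set.indicator_of_notMem (by simp [Set.mem_Ioc]; intro h; linarith [h1.2])]
      ring
    · rw [if_neg h1]
      rw [Set.indicator_of_notMem (by simpa [Set.mem_Ico] using h1)]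
      by_cases h2 : L ≤ t ∧ t ≤ R
      · rw [if_pos h2]
        rw [Set.indicator_of_mem (Set.mem_Icc.mpr h2),
          Set.indicator_of_notMem (by simp [Set.mem_Ioc]; intro h; linarith [h2.2])]
        ring
      · rw [if_neg h2]
        rw [Set.indicator_of_notMem (by simpa [Set.mem_Icc] using h2)]
        by_cases h3 : R < t ∧ t ≤ b
        · rw [if_pos h3, Set.indicator_of_mem (Set.mem_Ioc.mpr h3)]; ring
        · rw [if_neg h3, Set.indicator_of_notMem (by simpa [Set.mem_Ioc] using h3)]
          ring
  constructor
  · intro t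
    rw [key t]
    have : ∀ (S : Set ℝ) (c : ℝ), 0 ≤ c → 0 ≤ Set.indicator S (fun _ => c) t := by
      intro S c hc; exact Set.indicator_nonneg (fun _ _ => hc) t
    have h1 := this (Set.Ico a L) q hQpos.le
    have h2 := this (Set.Icc L R) p hPpos.le
    have h3 := this (Set.Ioc R b) q hQpos.le
    linarith
  · have int1 : Integrable (Set.indicator (Set.Ico a L) (fun _ => q)) volume := by
      rw [integrable_indicator_iff measurableSet_Ico]
      exact integrableOn_const measure_Ico_lt_top.ne
    have int2 : Integrable (Set.indicator (Set.Icc L R) (fun _ => p)) volume := by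
      rw [integrable_indicator_iff measurableSet_Icc]
      exact integrableOn_const measure_Icc_lt_top.ne
    have int3 : Integrable (Set.indicator (Set.Ioc R b) (fun _ => q)) volume := by
      rw [integrable_indicator_iff measurableSet_Ioc]
      exact integrableOn_const measure_Ioc_lt_top.ne
    calc (∫ t : ℝ, zealG ε h H A x t)
        = ∫ t : ℝ, (Set.indicator (Set.Ico a L) (fun _ => q) t
          + Set.indicator (Set.Icc L R) (fun _ => p) t
          + Set.indicator (Set.Ioc R b) (fun _ => q) t) := by
          exact integral_congr_ae (Filter.Eventually.of_forall key)
      _ = (∫ t : ℝ, Set.indicator (Set.Ico a L) (fun _ => q) t)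
          + (∫ t : ℝ, Set.indicator (Set.Icc L R) (fun _ => p) t)
          + (∫ t : ℝ, Set.indicator (Set.Ioc R b) (fun _ => q) t) := by
          have e1 := integral_add (μ := volume) (int1.add int2) int3
          have e2 := integral_add (μ := volume) int1 int2
          simp only [Pi.add_apply] at e1
          rw [e1, e2]
      _ = (L - a) * q + (R - L) * p + (b - R) * q := by
          rw [integral_indicator_const _ measurableSet_Ico,
            integral_indicator_const _ measurableSet_Icc,
            integral_indicator_const _ measurableSet_Ioc,
            Real.volume_real_Ico, Real.volume_real_Icc, Real.volume_real_Ioc,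
            max_eq_left (by linarith : (0:ℝ) ≤ L - a), max_eq_left (by linarith : (0:ℝ) ≤ R - L),
            max_eq_left (by linarith : (0:ℝ) ≤ b - R)]
          simp [smul_eq_mul]
      _ = 1 := by
          have hLa : L - a = (zealC ε h + h) / 2 * ((x - H) / h + 1) := by
            rw [hL_def, ha_def, zealL]; ring
          have hbR : b - R = (zealC ε h + h) / 2 * (1 - (x - H) / h) := by
            rw [hb_def, hR_def, zealR, zealL]; ring
          have hRL : R - L = zealC ε h - h := by
            rw [hR_def, zealR]; ring
          rw [hLa, hbR, hRL, hChsub, hChadd]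
          simp only [hq_def, hp_def, zealP, hes, ← hs_def]
          field_simp
          ring
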